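/- arXiv:2405.10249 — 2 statements merged into one kernel-verified Lean document; each statement's English description precedes it below -/
import Mathlib

section
/- Let Δ ≥ 0. Define, in an abstract message-timing model, a schedule as a set S of pairs (s, r) ∈ ℝ≥0 × ℝ≥0 with s ≤ r (send time, receive time). Say S satisfies UL(Δ) if r ≤ s + Δ for all (s, r) ∈ S, and satisfies GST(Δ', T) if r ≤ max(s, T) + Δ' for all (s, r) ∈ S. Prove: if S satisfies UL(Δ) under real time, then the transformed schedule S' = {(√s, √r) : (s, r) ∈ S} satisfies GST(1, T) with T = (1/2)·(max(1, Δ) − 1). -/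
theorem UL_to_GST_schedule (Δ : ℝ) (hΔ : 0 ≤ Δ) (S : Set (ℝ × ℝ))
    (hS : ∀ p ∈ S, 0 ≤ p.1 ∧ p.1 ≤ p.2)
    (hUL : ∀ p ∈ S, p.2 ≤ p.1 + Δ) :
    ∀ p ∈ S, Real.sqrt p.2 ≤ max (Real.sqrt p.1) ((1 / 2) * (max 1 Δ - 1)) + 1 := by
  intro p hp
  obtain ⟨hs0, hsr⟩ := hS p hp
  have hr := hUL p hp
  set s := p.1
  set r := p.2
  set T : ℝ := (1 / 2) * (max 1 Δ - 1) with hT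
  have hT0 : 0 ≤ T := by
    have : (1:ℝ) ≤ max 1 Δ := le_max_left _ _
    nlinarith
  have hM : Δ ≤ 2 * T + 1 := by
    have : Δ ≤ max 1 Δ := le_max_right _ _
    nlinarith
  rcases le_or_gt T (Real.sqrt s) with h | h
  · have hss : Real.sqrt s * Real.sqrt s = s := Real.mul_self_sqrt hs0
    have key : r ≤ (Real.sqrt s + 1) ^ 2 := by nlinarith
    have := Real.sqrt_le_sqrt key
    rw [Real.sqrt_sq (by positivity)] at this
    calc Real.sqrt r ≤ Real.sqrt s + 1 := this
      _ ≤ max (Real.sqrt s) T + 1 := by gcongr; exact le_max_left _ _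
  · have hsT : s < T ^ 2 := by
      have h2 := mul_self_lt_mul_self (Real.sqrt_nonneg s) h
      have h3 := Real.mul_self_sqrt hs0
      nlinarith
    have key : r ≤ (T + 1) ^ 2 := by nlinarith
    have := Real.sqrt_le_sqrt key
    rw [Real.sqrt_sq (by positivity)] at this
    calc Real.sqrt r ≤ T + 1 := this
      _ ≤ max (Real.sqrt s) T + 1 := by gcongr; exact le_max_right _ _
end

section
/- For every Δ ≥ 0 there exists T ≥ 0 such that for all reals s, r with 0 ≤ s ≤ r ≤ s + Δ, one has √r ≤ max(√s, T) + 1; explicitly one may take T = (1/2)·(max(1, Δ) − 1). -/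
theorem schedule_transform_GST (Δ : ℝ) (hΔ : 0 ≤ Δ) :
    ∃ T : ℝ, 0 ≤ T ∧ T = (1 / 2) * (max 1 Δ - 1) ∧
      ∀ s r : ℝ, 0 ≤ s → s ≤ r → r ≤ s + Δ →
        Real.sqrt r ≤ max (Real.sqrt s) T + 1 := by
  set M := max 1 Δ with hM
  have hM1 : 1 ≤ M := le_max_left _ _
  refine ⟨(1/2) * (M - 1), by nlinarith, rfl, ?_⟩
  intro s r hs hsr hrs
  set m := max (Real.sqrt s) ((1/2) * (M - 1)) with hm
  have hm0 : 0 ≤ m := le_trans (Real.sqrt_nonneg s) (le_max_left _ _)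
  have hms : Real.sqrt s ≤ m := le_max_left _ _
  have hmT : (1/2) * (M - 1) ≤ m := le_max_right _ _
  have hsm : s ≤ m ^ 2 := by
    have := Real.sq_sqrt hs
    nlinarith [Real.sqrt_nonneg s]
  have hr : r ≤ (m + 1) ^ 2 := by
    have hΔM : Δ ≤ M := le_max_right _ _
    nlinarith
  calc Real.sqrt r ≤ Real.sqrt ((m + 1) ^ 2) := Real.sqrt_le_sqrt hr
    _ = m + 1 := by rw [Real.sqrt_sq (by linarith)]
end
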